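/- If I is a Borel-fixed monomial ideal in K[x_0,...,x_n], then its saturation with respect to the irrelevant maximal ideal is generated by the monomials obtained by substituting x_0 = 1 in the minimal monomial generators of I. -/

import Mathlib

open MvPolynomial Filter

noncomputable section

/-- The Hilbert function of `K[x_0,...,x_{m-1}]/I` in degree `t`. -/
def hilb {K : Type*} [Field K] (m : ℕ) (I : Ideal (MvPolynomial (Fin m) K)) (t : ℕ) : ℤ :=
  (Module.finrank K (MvPolynomial.homogeneousSubmodule (Fin m) K t) : ℤ) -
  (Module.finrank K
    (Submodule.restrictScalars K
        (I : Submodule (MvPolynomial (Fin m) K) (MvPolynomial (Fin m) K)) ⊓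
      MvPolynomial.homogeneousSubmodule (Fin m) K t :
        Submodule K (MvPolynomial (Fin m) K)) : ℤ)

/-- Saturation of `I` w.r.t. the irrelevant ideal: `I^sat = ⋃_k (I : (x_0,...,x_{m-1})^k)`. -/
def sat {K : Type*} [Field K] (m : ℕ) (I : Ideal (MvPolynomial (Fin m) K)) :
    Ideal (MvPolynomial (Fin m) K) :=
  ⨆ k : ℕ, Submodule.colon
    (I : Submodule (MvPolynomial (Fin m) K) (MvPolynomial (Fin m) K))
    (((Ideal.span (Set.range X)) ^ k : Ideal (MvPolynomial (Fin m) K)) :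
      Submodule (MvPolynomial (Fin m) K) (MvPolynomial (Fin m) K))

/-- The combinatorial Borel condition: `x^α ∈ I`, `x_i ∣ x^α`, `j > i` implies
`(x_j/x_i)·x^α ∈ I` (variables ordered `x_{m-1} > ... > x_0`). -/
def borelCond {K : Type*} [Field K] (m : ℕ) (I : Ideal (MvPolynomial (Fin m) K)) : Prop :=
  ∀ α : Fin m →₀ ℕ, monomial α (1:K) ∈ I → ∀ i j : Fin m, i < j → α i ≠ 0 →
    monomial (α - Finsupp.single i 1 + Finsupp.single j 1) (1:K) ∈ I

/-- `I` is a monomial ideal. -/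
def isMonomialIdeal {K : Type*} [Field K] (m : ℕ) (I : Ideal (MvPolynomial (Fin m) K)) : Prop :=
  ∃ S : Set (Fin m →₀ ℕ), I = Ideal.span ((fun α => monomial α (1:K)) '' S)

/-- Increasing elementary Borel move on exponent vectors: `β = (x_{i+1}/x_i)·α`. -/
def stepUp (n : ℕ) (α β : Fin (n+1) →₀ ℕ) : Prop :=
  ∃ i : Fin n, α i.castSucc ≠ 0 ∧
    β = α - Finsupp.single i.castSucc 1 + Finsupp.single i.succ 1

/-- Borel partial order: `borelGE n α β` means `α ≥_B β`. -/
def borelGE (n : ℕ) (α β : Fin (n+1) →₀ ℕ) : Prop :=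
  Relation.ReflTransGen (stepUp n) β α

/-- Rational binomial coefficient `C(x, k) = x(x-1)...(x-k+1)/k!`. -/
def qchoose (x : ℚ) (k : ℕ) : ℚ := (∏ i ∈ Finset.range k, (x - i)) / (Nat.factorial k)

/-- `Σ_{i=0}^{r-1} C(t + a_i - i, a_i)` for a list `l = [a_0, ..., a_{r-1}]`. -/
def gsum (l : List ℕ) (t : ℚ) : ℚ :=
  (((List.range l.length).zip l).map (fun q => qchoose (t + (q.2 : ℚ) - (q.1 : ℚ)) q.2)).sum

/-- First difference operator on polynomials: `Δq(t) = q(t) - q(t-1)`. -/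
def dlt (q : Polynomial ℚ) : Polynomial ℚ := q - q.comp (Polynomial.X - 1)


namespace St2Aux
variable {K : Type*} [Field K] {σ : Type*} {n : ℕ}

/-- total degree of an exponent vector -/
def deg (β : σ →₀ ℕ) : ℕ := β.sum fun _ v => v

lemma deg_add (a b : σ →₀ ℕ) : deg (a + b) = deg a + deg b :=
  Finsupp.sum_add_index' (fun _ => rfl) (fun _ _ _ => rfl)

lemma deg_single (i : σ) (k : ℕ) : deg (Finsupp.single i k) = k :=
  Finsupp.sum_single_index rfl

lemma deg_mono {a b : σ →₀ ℕ} (h : a ≤ b) : deg a ≤ deg b := by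
  have h2 : a + (b - a) = b := add_tsub_cancel_of_le h
  have := deg_add a (b - a)
  rw [h2] at this
  omega

lemma mem_of_le {I : Ideal (MvPolynomial σ K)} {γ δ : σ →₀ ℕ} (h : γ ≤ δ)
    (hγ : monomial γ (1:K) ∈ I) : monomial δ (1:K) ∈ I := by
  have : monomial δ (1:K) = monomial (δ - γ) 1 * monomial γ 1 := by
    rw [monomial_mul, mul_one, tsub_add_cancel_of_le h]
  rw [this]
  exact I.mul_mem_left _ hγ

lemma upd_apply [DecidableEq σ] (α : σ →₀ ℕ) (j i : σ) :
    Finsupp.update α j 0 i = if i = j then 0 else α i := by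
  classical
  rw [Finsupp.coe_update, Function.update_apply]

lemma key {I : Ideal (MvPolynomial (Fin (n+1)) K)} (hb : borelCond (n+1) I) :
    ∀ c (α β : Fin (n+1) →₀ ℕ), α 0 = c → monomial α (1:K) ∈ I →
      c ≤ deg β → monomial (Finsupp.update α 0 0 + β) (1:K) ∈ I := by
  classical
  intro c
  induction c with
  | zero =>
    intro α β h0 hα _
    have hu : Finsupp.update α 0 0 = α := by have := Finsupp.update_self α 0; rwa [h0] at this
    rw [hu]
    exact mem_of_le le_self_add hα
  | succ c ih =>
    intro α β h0 hα hd
    by_cases hj : ∃ j : Fin (n+1), j ≠ 0 ∧ β j ≠ 0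
    · obtain ⟨j, hj0, hjβ⟩ := hj
      have h1 : 1 ≤ β j := Nat.one_le_iff_ne_zero.mpr hjβ
      have hα0 : α 0 ≠ 0 := by rw [h0]; omega
      have hlt : (0 : Fin (n+1)) < j := Fin.pos_of_ne_zero hj0
      have hα' := hb α hα 0 j hlt hα0
      set α' := α - Finsupp.single 0 1 + Finsupp.single j 1 with hα'def
      have hα'0 : α' 0 = c := by
        simp [hα'def, Finsupp.single_apply, hj0]
        omega
      set β' := β - Finsupp.single j 1 with hβ'def
      have hββ' : β = β' + Finsupp.single j 1 := by
        ext i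
        by_cases h : i = j
        · subst h; simp [hβ'def]; omega
        · simp [hβ'def, Finsupp.single_apply, Ne.symm h]
      have hdβ' : c ≤ deg β' := by
        have hdd : deg β = deg β' + 1 := by rw [hββ', deg_add, deg_single]
        omega
      have hres := ih α' β' hα'0 hα' hdβ'
      have heq : Finsupp.update α' 0 0 + β' = Finsupp.update α 0 0 + β := by
        ext i
        by_cases h0i : i = 0
        · subst h0i
          simp [upd_apply, hβ'def, Finsupp.single_apply, hj0]
        · by_cases h : i = j
          · subst h
            simp [upd_apply, hα'def, hβ'def, h0i, Finsupp.single_apply, Ne.symm h0i]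
            omega
          · simp [upd_apply, hα'def, hβ'def, h0i, Finsupp.single_apply, Ne.symm h0i,
              Ne.symm h]
      rwa [heq] at hres
    · push_neg at hj
      have hβ0 : deg β = β 0 := by
        have hβ : β = Finsupp.single 0 (β 0) := by
          ext i
          by_cases h : i = 0
          · subst h; simp
          · rw [hj i h, Finsupp.single_apply, if_neg (fun h2 : (0:Fin (n+1)) = i => h h2.symm)]
        conv_lhs => rw [hβ]
        rw [deg_single]
      have hle : α ≤ Finsupp.update α 0 0 + β := by
        rw [Finsupp.le_def]
        intro i
        rw [Finsupp.add_apply, upd_apply]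
        by_cases h : i = 0
        · subst h; rw [if_pos rfl]; omega
        · rw [if_neg h]; omega
      exact mem_of_le hle hα

lemma pow_le (k : ℕ) :
    ((Ideal.span (Set.range (X : σ → MvPolynomial σ K)))^k : Ideal (MvPolynomial σ K)) ≤
      Ideal.span ((fun γ => monomial γ (1:K)) '' {γ : σ →₀ ℕ | k ≤ deg γ}) := by
  induction k with
  | zero =>
    rw [pow_zero, Ideal.one_eq_top, top_le_iff, Ideal.eq_top_iff_one]
    have : (1 : MvPolynomial σ K) = monomial 0 1 := by simp
    rw [this]
    exact Ideal.subset_span ⟨0, by simp, rfl⟩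
  | succ k ih =>
    rw [pow_succ]
    refine le_trans (Ideal.mul_mono ih le_rfl) ?_
    rw [Ideal.span_mul_span, Ideal.span_le]
    intro x hx
    rw [Set.mem_mul] at hx
    obtain ⟨s, hs, t, ht, rfl⟩ := hx
    obtain ⟨γ, hγ, rfl⟩ := hs
    obtain ⟨i, rfl⟩ := ht
    have hXi : (X i : MvPolynomial σ K) = monomial (Finsupp.single i 1) 1 := rfl
    have hmul : monomial γ (1:K) * X i = monomial (γ + Finsupp.single i 1) 1 := by
      rw [hXi, monomial_mul, mul_one]
    rw [SetLike.mem_coe, hmul]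
    refine Ideal.subset_span ⟨γ + Finsupp.single i 1, ?_, rfl⟩
    have : deg (γ + Finsupp.single i 1) = deg γ + 1 := by rw [deg_add, deg_single]
    simp only [Set.mem_setOf_eq] at hγ ⊢
    omega

end St2Aux

/-- for a Borel-fixed monomial ideal `I` generated by the monomials `x^α`,
`α ∈ S`, its saturation w.r.t. the irrelevant ideal is generated by the monomials
obtained substituting `x_0 = 1` in the generators. -/
theorem statement2 {K : Type*} [Field K] [CharZero K] (n : ℕ)
    (S : Set (Fin (n+1) →₀ ℕ))
    (I : Ideal (MvPolynomial (Fin (n+1)) K))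
    (hI : I = Ideal.span ((fun α => monomial α (1:K)) '' S))
    (hborel : borelCond (n+1) I) :
    sat (n+1) I =
      Ideal.span ((fun α => monomial (Finsupp.update α 0 0) (1:K)) '' S) := by
    classical
  apply le_antisymm
  · unfold sat
    apply iSup_le
    intro k f hf
    have hx : ((X 0 : MvPolynomial (Fin (n+1)) K))^k ∈ ((Ideal.span (Set.range X))^k : Ideal _) :=
      Ideal.pow_mem_pow (Ideal.subset_span (Set.mem_range_self 0)) k
    have hfp : f * (X 0)^k ∈ I := by
      have := Submodule.mem_colon.mp hf _ hx
      simpa [smul_eq_mul] using this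
    rw [show Ideal.span ((fun α => monomial (Finsupp.update α 0 0) (1:K)) '' S)
        = Ideal.span ((fun γ => monomial γ (1:K)) '' ((fun α => Finsupp.update α 0 0) '' S)) by
        rw [Set.image_image]]
    rw [mem_ideal_span_monomial_image]
    intro δ hδ
    rw [hI, mem_ideal_span_monomial_image] at hfp
    have hsup : δ + Finsupp.single 0 k ∈ (f * (X 0)^k).support := by
      rw [mem_support_iff, X_pow_eq_monomial, coeff_mul_monomial, mul_one]
      exact mem_support_iff.mp hδ
    obtain ⟨s, hsS, hle⟩ := hfp _ hsup
    refine ⟨Finsupp.update s 0 0, ⟨s, hsS, rfl⟩, ?_⟩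
    rw [Finsupp.le_def]
    intro i
    have h2 := Finsupp.le_def.mp hle i
    rw [St2Aux.upd_apply]
    by_cases h : i = 0
    · rw [if_pos h]
      omega
    · rw [if_neg h]
      rw [Finsupp.add_apply, Finsupp.single_apply,
        if_neg (fun h2 : (0:Fin (n+1)) = i => h h2.symm)] at h2
      omega
  · rw [Ideal.span_le]
    rintro x ⟨α, hαS, rfl⟩
    have hmem : monomial α (1:K) ∈ I := by
      rw [hI]; exact Ideal.subset_span ⟨α, hαS, rfl⟩
    show monomial (Finsupp.update α 0 0) (1:K) ∈ sat (n+1) I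
    unfold sat
    refine Submodule.mem_iSup_of_mem (α 0) ?_
    rw [Submodule.mem_colon]
    intro p hp
    have hp' := St2Aux.pow_le (α 0) hp
    rw [mem_ideal_span_monomial_image] at hp'
    rw [smul_eq_mul]
    show monomial (Finsupp.update α 0 0) (1:K) * p ∈ I
    rw [hI, mem_ideal_span_monomial_image]
    intro δ hδ
    rw [mem_support_iff, coeff_monomial_mul'] at hδ
    by_cases hle : Finsupp.update α 0 0 ≤ δ
    · rw [if_pos hle, one_mul] at hδ
      obtain ⟨γ', hγ', hγ'le⟩ := hp' _ (mem_support_iff.mpr hδ)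
      have hdeg : α 0 ≤ St2Aux.deg (δ - Finsupp.update α 0 0) :=
        le_trans hγ' (St2Aux.deg_mono hγ'le)
      have hkey := St2Aux.key hborel (α 0) α (δ - Finsupp.update α 0 0) rfl hmem hdeg
      rw [add_tsub_cancel_of_le hle] at hkey
      rw [hI, mem_ideal_span_monomial_image] at hkey
      exact hkey δ (by simp [support_monomial])
    · rw [if_neg hle] at hδ
      exact absurd rfl hδ
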